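/- Let U > 0 and C ∈ (0, U/8]. For ε ∈ (0,1) define σ(ε) = min{k ∈ ℕ, k ≥ 1 : (k+1)·ε^k − k·ε^{k−1} < C/((1 − ε)·U)} when C < (1 − ε)·U, and σ(ε) = 0 when C ≥ (1 − ε)·U. Then σ is unimodal on (0,1): there exists ε₀ ∈ (0,1) such that σ is nondecreasing on (0, ε₀] and nonincreasing on [ε₀, 1). -/
import Mathlib

private lemma rpow_pow_comm {x : ℝ} (hx : 0 ≤ x) (a : ℝ) (n : ℕ) :
    (x ^ a) ^ n = (x ^ n) ^ a := by
  rw [← Real.rpow_natCast (x ^ a) n, ← Real.rpow_mul hx, mul_comm,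
    Real.rpow_mul hx, Real.rpow_natCast]

/-- Quasiconcavity of `F(t) = (1-t)·U·t^m·((m+2)t-(m+1))` above positive levels. -/
private lemma quasi (U C : ℝ) (hU : 0 < U) (hC : 0 < C) (m : ℕ)
    {x y z : ℝ} (hx : 0 < x) (hz1 : z < 1) (hxy : x ≤ y) (hyz : y ≤ z)
    (H1 : C ≤ (1 - x) * U * (x ^ m * (((m : ℝ) + 2) * x - ((m : ℝ) + 1))))
    (H2 : C ≤ (1 - z) * U * (z ^ m * (((m : ℝ) + 2) * z - ((m : ℝ) + 1)))) :
    C ≤ (1 - y) * U * (y ^ m * (((m : ℝ) + 2) * y - ((m : ℝ) + 1))) := by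
  have hy : 0 < y := lt_of_lt_of_le hx hxy
  have hy1 : y < 1 := lt_of_le_of_lt hyz hz1
  have hx1 : x < 1 := lt_of_le_of_lt hxy hy1
  have hz : 0 < z := lt_of_lt_of_le hy hyz
  -- the linear factor is positive at x and z
  have hLx : 0 < ((m : ℝ) + 2) * x - ((m : ℝ) + 1) := by
    by_contra h
    push_neg at h
    have h1 : x ^ m * (((m : ℝ) + 2) * x - ((m : ℝ) + 1)) ≤ 0 :=
      mul_nonpos_of_nonneg_of_nonpos (pow_nonneg hx.le _) h
    have h2 : (1 - x) * U * (x ^ m * (((m : ℝ) + 2) * x - ((m : ℝ) + 1))) ≤ 0 :=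
      mul_nonpos_of_nonneg_of_nonpos (mul_nonneg (by linarith) hU.le) h1
    linarith
  have hLz : 0 < ((m : ℝ) + 2) * z - ((m : ℝ) + 1) := by
    by_contra h
    push_neg at h
    have h1 : z ^ m * (((m : ℝ) + 2) * z - ((m : ℝ) + 1)) ≤ 0 :=
      mul_nonpos_of_nonneg_of_nonpos (pow_nonneg hz.le _) h
    have h2 : (1 - z) * U * (z ^ m * (((m : ℝ) + 2) * z - ((m : ℝ) + 1))) ≤ 0 :=
      mul_nonpos_of_nonneg_of_nonpos (mul_nonneg (by linarith) hU.le) h1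
    linarith
  have hLy : 0 < ((m : ℝ) + 2) * y - ((m : ℝ) + 1) := by nlinarith
  rcases eq_or_lt_of_le (hxy.trans hyz) with hxz | hxz
  · have h1 : y = x := le_antisymm (hxz ▸ hyz) hxy
    rw [h1]; exact H1
  -- weights
  set b : ℝ := (y - x) / (z - x) with hbdef
  set a : ℝ := 1 - b with hadef
  have hzx : 0 < z - x := by linarith
  have hb0 : 0 ≤ b := div_nonneg (by linarith) hzx.le
  have hb1 : b ≤ 1 := by
    rw [hbdef, div_le_one hzx]; linarith
  have ha0 : 0 ≤ a := by simp only [hadef]; linarith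
  have hab : a + b = 1 := by simp [hadef]
  have hy_eq : y = a * x + b * z := by
    have hb : b * (z - x) = y - x := div_mul_cancel₀ _ hzx.ne'
    simp only [hadef]; nlinarith [hb]
  -- AM-GM for each factor
  have gm1 : (1 - x) ^ a * (1 - z) ^ b ≤ 1 - y := by
    have h := Real.geom_mean_le_arith_mean2_weighted ha0 hb0
      (by linarith : (0:ℝ) ≤ 1 - x) (by linarith : (0:ℝ) ≤ 1 - z) hab
    calc (1 - x) ^ a * (1 - z) ^ b ≤ a * (1 - x) + b * (1 - z) := h
      _ = 1 - y := by rw [hy_eq]; simp only [hadef]; ring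
  have gm2 : x ^ a * z ^ b ≤ y := by
    have h := Real.geom_mean_le_arith_mean2_weighted ha0 hb0 hx.le hz.le hab
    calc x ^ a * z ^ b ≤ a * x + b * z := h
      _ = y := hy_eq.symm
  have gm3 : (((m : ℝ) + 2) * x - ((m : ℝ) + 1)) ^ a * (((m : ℝ) + 2) * z - ((m : ℝ) + 1)) ^ b
      ≤ ((m : ℝ) + 2) * y - ((m : ℝ) + 1) := by
    have h := Real.geom_mean_le_arith_mean2_weighted ha0 hb0 hLx.le hLz.le hab
    calc _ ≤ a * (((m : ℝ) + 2) * x - ((m : ℝ) + 1)) + b * (((m : ℝ) + 2) * z - ((m : ℝ) + 1)) := h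
      _ = ((m : ℝ) + 2) * y - ((m : ℝ) + 1) := by rw [hy_eq]; simp only [hadef]; ring
  -- power factor
  have gmp : (x ^ m) ^ a * (z ^ m) ^ b ≤ y ^ m := by
    have h0 : 0 ≤ x ^ a * z ^ b := by positivity
    have h := pow_le_pow_left₀ h0 gm2 m
    calc (x ^ m) ^ a * (z ^ m) ^ b = (x ^ a) ^ m * (z ^ b) ^ m := by
          rw [rpow_pow_comm hx.le, rpow_pow_comm hz.le]
      _ = (x ^ a * z ^ b) ^ m := (mul_pow _ _ _).symm
      _ ≤ y ^ m := h
  -- combine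
  have hFx : (0:ℝ) ≤ (1 - x) * U * (x ^ m * (((m : ℝ) + 2) * x - ((m : ℝ) + 1))) := le_of_lt (lt_of_lt_of_le hC H1)
  have hFz : (0:ℝ) ≤ (1 - z) * U * (z ^ m * (((m : ℝ) + 2) * z - ((m : ℝ) + 1))) := le_of_lt (lt_of_lt_of_le hC H2)
  have expand : ((1 - x) * U * (x ^ m * (((m : ℝ) + 2) * x - ((m : ℝ) + 1)))) ^ a
      * ((1 - z) * U * (z ^ m * (((m : ℝ) + 2) * z - ((m : ℝ) + 1)))) ^ b
      = ((1 - x) ^ a * (1 - z) ^ b) * (U ^ a * U ^ b)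
        * (((x ^ m) ^ a * (z ^ m) ^ b)
          * ((((m : ℝ) + 2) * x - ((m : ℝ) + 1)) ^ a * (((m : ℝ) + 2) * z - ((m : ℝ) + 1)) ^ b)) := by
    rw [Real.mul_rpow (mul_nonneg (by linarith) hU.le) (mul_nonneg (by positivity) hLx.le),
        Real.mul_rpow (by linarith : (0:ℝ) ≤ 1 - x) hU.le,
        Real.mul_rpow (by positivity : (0:ℝ) ≤ x ^ m) hLx.le,
        Real.mul_rpow (mul_nonneg (by linarith) hU.le) (mul_nonneg (by positivity) hLz.le),
        Real.mul_rpow (by linarith : (0:ℝ) ≤ 1 - z) hU.le,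
        Real.mul_rpow (by positivity : (0:ℝ) ≤ z ^ m) hLz.le]
    ring
  have hUU : U ^ a * U ^ b = U := by
    rw [← Real.rpow_add hU, hab, Real.rpow_one]
  have big : ((1 - x) ^ a * (1 - z) ^ b) * (U ^ a * U ^ b)
      * (((x ^ m) ^ a * (z ^ m) ^ b)
        * ((((m : ℝ) + 2) * x - ((m : ℝ) + 1)) ^ a * (((m : ℝ) + 2) * z - ((m : ℝ) + 1)) ^ b))
      ≤ (1 - y) * U * (y ^ m * (((m : ℝ) + 2) * y - ((m : ℝ) + 1))) := by
    rw [hUU]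
    have n3 : (0:ℝ) ≤ (x ^ m) ^ a * (z ^ m) ^ b :=
      mul_nonneg (Real.rpow_nonneg (pow_nonneg hx.le m) a) (Real.rpow_nonneg (pow_nonneg hz.le m) b)
    have n4 : (0:ℝ) ≤ (((m : ℝ) + 2) * x - ((m : ℝ) + 1)) ^ a
        * (((m : ℝ) + 2) * z - ((m : ℝ) + 1)) ^ b :=
      mul_nonneg (Real.rpow_nonneg hLx.le a) (Real.rpow_nonneg hLz.le b)
    have hyU : (0:ℝ) ≤ (1 - y) * U := mul_nonneg (by linarith) hU.le
    have n5 : (0:ℝ) ≤ y ^ m := by positivity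
    exact mul_le_mul (mul_le_mul_of_nonneg_right gm1 hU.le)
      (mul_le_mul gmp gm3 n4 n5) (mul_nonneg n3 n4) hyU
  have hCab : C = C ^ a * C ^ b := by rw [← Real.rpow_add hC, hab, Real.rpow_one]
  have step : C ^ a * C ^ b ≤ ((1 - x) * U * (x ^ m * (((m : ℝ) + 2) * x - ((m : ℝ) + 1)))) ^ a
      * ((1 - z) * U * (z ^ m * (((m : ℝ) + 2) * z - ((m : ℝ) + 1)))) ^ b :=
    mul_le_mul (Real.rpow_le_rpow hC.le H1 ha0) (Real.rpow_le_rpow hC.le H2 hb0)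
      (Real.rpow_nonneg hC.le b) (Real.rpow_nonneg hFx a)
  exact hCab.trans_le (step.trans ((le_of_eq expand).trans big))

/-- STATEMENT 16 (Corollary 1, low-cost case `C ∈ (0, U/8]`): the induced
optimal prompt number `σ ε = min {k ≥ 1 : (k+1)·ε^k - k·ε^(k-1) < C/((1-ε)U)}`
(with `σ ε = 0` when `C ≥ (1-ε)U`) is unimodal on `(0,1)`: nondecreasing up to
some `ε₀ ∈ (0,1)` and nonincreasing afterwards. -/
theorem induced_prompt_number_unimodal_low_cost
    (U C : ℝ) (hU : 0 < U) (hC : C ∈ Set.Ioc (0 : ℝ) (U / 8))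
    (σ : ℝ → ℕ)
    (hσ : ∀ ε ∈ Set.Ioo (0 : ℝ) 1,
      (C < (1 - ε) * U →
        IsLeast {k : ℕ | 1 ≤ k ∧
          ((k : ℝ) + 1) * ε ^ k - (k : ℝ) * ε ^ (k - 1) < C / ((1 - ε) * U)}
          (σ ε)) ∧
      ((1 - ε) * U ≤ C → σ ε = 0)) :
    ∃ ε₀ ∈ Set.Ioo (0 : ℝ) 1,
      (∀ ε₁ ∈ Set.Ioo (0 : ℝ) 1, ∀ ε₂ ∈ Set.Ioo (0 : ℝ) 1,
        ε₁ ≤ ε₂ → ε₂ ≤ ε₀ → σ ε₁ ≤ σ ε₂) ∧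
      (∀ ε₁ ∈ Set.Ioo (0 : ℝ) 1, ∀ ε₂ ∈ Set.Ioo (0 : ℝ) 1,
        ε₀ ≤ ε₁ → ε₁ ≤ ε₂ → σ ε₂ ≤ σ ε₁) := by
  obtain ⟨hC0, hC8⟩ := hC
  -- a uniform bound on σ
  set k₀ : ℕ := ⌈U / C⌉₊ with hk₀def
  have hk₀ : U < C * ((k₀ : ℝ) + 1) := by
    have h1 : U / C ≤ (k₀ : ℝ) := Nat.le_ceil _
    have h2 : U ≤ C * (k₀ : ℝ) := by
      rw [div_le_iff₀ hC0] at h1; linarith [h1]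
    nlinarith
  have hsmall : ∀ ε ∈ Set.Ioo (0:ℝ) 1,
      (1 - ε) * U * (ε ^ k₀ * (((k₀:ℝ) + 2) * ε - ((k₀:ℝ) + 1))) < C := by
    rintro ε ⟨hε0, hε1⟩
    rcases le_or_gt (((k₀:ℝ) + 2) * ε - ((k₀:ℝ) + 1)) 0 with h | h
    · have h1 : ε ^ k₀ * (((k₀:ℝ) + 2) * ε - ((k₀:ℝ) + 1)) ≤ 0 :=
        mul_nonpos_of_nonneg_of_nonpos (pow_nonneg hε0.le _) h
      have h2 : (1 - ε) * U * (ε ^ k₀ * (((k₀:ℝ) + 2) * ε - ((k₀:ℝ) + 1))) ≤ 0 :=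
        mul_nonpos_of_nonneg_of_nonpos (mul_nonneg (by linarith) hU.le) h1
      linarith
    · have hp1 : ε ^ k₀ ≤ 1 := pow_le_one₀ hε0.le hε1.le
      have h2 : ((k₀:ℝ) + 2) * ε - ((k₀:ℝ) + 1) < 1 := by nlinarith
      have h3 : ((k₀:ℝ) + 2) * (1 - ε) < 1 := by nlinarith
      have t1 : ε ^ k₀ * (((k₀:ℝ) + 2) * ε - ((k₀:ℝ) + 1)) ≤ 1 := by nlinarith
      have hεU : (0:ℝ) ≤ (1 - ε) * U := mul_nonneg (by linarith) hU.le
      have t2 : (1 - ε) * U * (ε ^ k₀ * (((k₀:ℝ) + 2) * ε - ((k₀:ℝ) + 1))) ≤ (1 - ε) * U := by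
        nlinarith
      have t3 : (1 - ε) * U < C := by
        nlinarith [mul_lt_mul_of_pos_right h3 hU]
      linarith
  have hle : ∀ ε ∈ Set.Ioo (0:ℝ) 1, σ ε ≤ k₀ + 1 := by
    intro ε hε
    rcases le_or_gt ((1 - ε) * U) C with h | h
    · rw [(hσ ε hε).2 h]; exact Nat.zero_le _
    · have h0 : (0:ℝ) < (1 - ε) * U := lt_trans hC0 h
      refine ((hσ ε hε).1 h).2 ⟨Nat.le_add_left 1 k₀, ?_⟩
      rw [lt_div_iff₀ h0]
      have hrw : (((k₀ + 1 : ℕ) : ℝ) + 1) * ε ^ (k₀ + 1)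
          - ((k₀ + 1 : ℕ) : ℝ) * ε ^ ((k₀ + 1) - 1)
          = ε ^ k₀ * (((k₀:ℝ) + 2) * ε - ((k₀:ℝ) + 1)) := by
        push_cast [Nat.add_sub_cancel]; ring
      rw [hrw]
      have := hsmall ε hε
      linarith [this]
  -- argmax
  have hTne : (σ '' Set.Ioo (0:ℝ) 1).Nonempty :=
    ⟨σ (1/2), ⟨1/2, by norm_num, rfl⟩⟩
  have hTb : BddAbove (σ '' Set.Ioo (0:ℝ) 1) := by
    refine ⟨k₀ + 1, ?_⟩
    rintro n ⟨ε, hε, rfl⟩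
    exact hle ε hε
  obtain ⟨ε₀, hε₀, hσε₀⟩ := Nat.sSup_mem hTne hTb
  have hmax : ∀ ε ∈ Set.Ioo (0:ℝ) 1, σ ε ≤ σ ε₀ := by
    intro ε hε
    rw [hσε₀]
    exact le_csSup hTb ⟨ε, hε, rfl⟩
  -- interval property of superlevel sets
  have L : ∀ x ∈ Set.Ioo (0:ℝ) 1, ∀ y ∈ Set.Ioo (0:ℝ) 1, ∀ z ∈ Set.Ioo (0:ℝ) 1,
      x ≤ y → y ≤ z → min (σ x) (σ z) ≤ σ y := by
    rintro x ⟨hx0, hx1⟩ y hy z ⟨hz0, hz1⟩ hxy hyz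
    by_contra hcon
    push_neg at hcon
    have hCx : C < (1 - x) * U := by
      by_contra h; push_neg at h
      have := (hσ x ⟨hx0, hx1⟩).2 h; omega
    have hCz : C < (1 - z) * U := by
      by_contra h; push_neg at h
      have := (hσ z ⟨hz0, hz1⟩).2 h; omega
    have hCy : C < (1 - y) * U := by
      have : (1 - z) * U ≤ (1 - y) * U :=
        mul_le_mul_of_nonneg_right (by linarith) hU.le
      linarith
    obtain ⟨⟨hy1, hylt⟩, -⟩ := (hσ y hy).1 hCy
    have hgex : C / ((1 - x) * U) ≤ ((σ y : ℝ) + 1) * x ^ (σ y) - (σ y : ℝ) * x ^ (σ y - 1) := by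
      by_contra h; push_neg at h
      have := ((hσ x ⟨hx0, hx1⟩).1 hCx).2 ⟨hy1, h⟩
      omega
    have hgez : C / ((1 - z) * U) ≤ ((σ y : ℝ) + 1) * z ^ (σ y) - (σ y : ℝ) * z ^ (σ y - 1) := by
      by_contra h; push_neg at h
      have := ((hσ z ⟨hz0, hz1⟩).1 hCz).2 ⟨hy1, h⟩
      omega
    obtain ⟨m, hm⟩ : ∃ m, σ y = m + 1 := ⟨σ y - 1, by omega⟩
    rw [hm] at hgex hgez hylt
    have h0x : (0:ℝ) < (1 - x) * U := lt_trans hC0 hCx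
    have h0z : (0:ℝ) < (1 - z) * U := lt_trans hC0 hCz
    have h0y : (0:ℝ) < (1 - y) * U := lt_trans hC0 hCy
    rw [div_le_iff₀ h0x] at hgex
    rw [div_le_iff₀ h0z] at hgez
    rw [lt_div_iff₀ h0y] at hylt
    have H1 : C ≤ (1 - x) * U * (x ^ m * (((m:ℝ) + 2) * x - ((m:ℝ) + 1))) := by
      calc C ≤ _ := hgex
        _ = (1 - x) * U * (x ^ m * (((m:ℝ) + 2) * x - ((m:ℝ) + 1))) := by
          push_cast [Nat.add_sub_cancel]; ring
    have H2 : C ≤ (1 - z) * U * (z ^ m * (((m:ℝ) + 2) * z - ((m:ℝ) + 1))) := by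
      calc C ≤ _ := hgez
        _ = (1 - z) * U * (z ^ m * (((m:ℝ) + 2) * z - ((m:ℝ) + 1))) := by
          push_cast [Nat.add_sub_cancel]; ring
    have H3 := quasi U C hU hC0 m hx0 hz1 hxy hyz H1 H2
    have hrw : ((((m + 1 : ℕ) : ℝ)) + 1) * y ^ (m + 1)
        - ((m + 1 : ℕ) : ℝ) * y ^ ((m + 1) - 1)
        = y ^ m * (((m:ℝ) + 2) * y - ((m:ℝ) + 1)) := by
      push_cast [Nat.add_sub_cancel]; ring
    nlinarith [hylt, H3, hrw]
  refine ⟨ε₀, hε₀, ?_, ?_⟩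
  · intro ε₁ h1 ε₂ h2 h12 h20
    have hL := L ε₁ h1 ε₂ h2 ε₀ hε₀ h12 h20
    have hm := hmax ε₁ h1
    omega
  · intro ε₁ h1 ε₂ h2 h01 h12
    have hL := L ε₀ hε₀ ε₁ h1 ε₂ h2 h01 h12
    have hm := hmax ε₂ h2
    omega
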